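/- The Mellin transform of G(x) = Σ_{k,j≥1} (-1)^{j-1}(2k-1)e^{-j(2k-1)x}, for x > 0, equals Γ(s)·ζ(s)·ζ(s-1)·(1-2^{1-s})² for real s > 2. -/

import Mathlib

open Complex MeasureTheory Set

lemma summable_f (σ : ℂ) (hσ : 1 < σ.re) : Summable (fun n : ℕ => 1 / ((n:ℂ) + 1) ^ σ) := by
  have h := (summable_nat_add_iff 1).mpr (Complex.summable_one_div_nat_cpow.mpr hσ)
  exact h.congr fun n => by norm_num

lemma tsum_even_part (σ : ℂ) (hσ : 1 < σ.re) :
    ∑' k : ℕ, 1 / (2 * (k:ℂ) + 2) ^ σ = 2 ^ (-σ) * riemannZeta σ := by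
  rw [zeta_eq_tsum_one_div_nat_add_one_cpow hσ, ← tsum_mul_left]
  congr 1 with k
  have h2 : (0:ℝ) ≤ 2 := by norm_num
  have hk : (0:ℝ) ≤ (k:ℝ) + 1 := by positivity
  have : ((2 * (k:ℂ) + 2)) = ((2:ℝ):ℂ) * ((((k:ℝ) + 1 : ℝ)):ℂ) := by push_cast; ring
  rw [this, mul_cpow_ofReal_nonneg h2 hk, cpow_neg]
  push_cast
  rw [one_div, mul_inv, div_eq_mul_inv, one_mul]

lemma tsum_odd_part (σ : ℂ) (hσ : 1 < σ.re) :
    ∑' k : ℕ, 1 / (2 * (k:ℂ) + 1) ^ σ = (1 - 2 ^ (-σ)) * riemannZeta σ := by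
  have hf := summable_f σ hσ
  have he : Summable (fun k : ℕ => 1 / (((2*k : ℕ):ℂ) + 1) ^ σ) :=
    hf.comp_injective (f := fun n : ℕ => 1 / ((n:ℂ) + 1) ^ σ) (i := fun k : ℕ => 2*k)
      (fun a b h => by dsimp only at h; omega)
  have ho : Summable (fun k : ℕ => 1 / (((2*k+1 : ℕ):ℂ) + 1) ^ σ) :=
    hf.comp_injective (f := fun n : ℕ => 1 / ((n:ℂ) + 1) ^ σ) (i := fun k : ℕ => 2*k+1)
      (fun a b h => by dsimp only at h; omega)
  have h := tsum_even_add_odd (f := fun n : ℕ => 1 / ((n:ℂ) + 1) ^ σ) he ho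
  rw [← zeta_eq_tsum_one_div_nat_add_one_cpow hσ] at h
  have he' : ∑' k : ℕ, 1 / (((2*k : ℕ):ℂ) + 1) ^ σ = ∑' k : ℕ, 1 / (2 * (k:ℂ) + 1) ^ σ := by
    congr 1 with k; push_cast; ring_nf
  have ho' : ∑' k : ℕ, 1 / (((2*k+1 : ℕ):ℂ) + 1) ^ σ = 2 ^ (-σ) * riemannZeta σ := by
    rw [← tsum_even_part σ hσ]; congr 1 with k; push_cast; ring_nf
  rw [he', ho'] at h
  linear_combination h

lemma tsum_alt (σ : ℂ) (hσ : 1 < σ.re) :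
    ∑' j : ℕ, (-1:ℂ) ^ j / ((j:ℂ) + 1) ^ σ = (1 - 2 ^ (1 - σ)) * riemannZeta σ := by
  set g : ℕ → ℂ := fun j => (-1:ℂ) ^ j / ((j:ℂ) + 1) ^ σ with hgdef
  have hf := summable_f σ hσ
  have hg : Summable g := by
    rw [← summable_norm_iff]
    rw [← summable_norm_iff] at hf
    exact hf.congr fun n => by simp [hgdef]
  have he : Summable (fun k : ℕ => g (2*k)) :=
    hg.comp_injective (i := fun k : ℕ => 2*k) (fun a b h => by dsimp only at h; omega)
  have ho : Summable (fun k : ℕ => g (2*k+1)) :=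
    hg.comp_injective (i := fun k : ℕ => 2*k+1) (fun a b h => by dsimp only at h; omega)
  have h := tsum_even_add_odd (f := g) he ho
  have he' : ∑' k : ℕ, g (2*k) = (1 - 2 ^ (-σ)) * riemannZeta σ := by
    rw [← tsum_odd_part σ hσ]
    congr 1 with k
    simp only [hgdef, pow_mul]
    push_cast
    norm_num
  have ho' : ∑' k : ℕ, g (2*k+1) = -(2 ^ (-σ) * riemannZeta σ) := by
    rw [← tsum_even_part σ hσ, ← tsum_neg]
    congr 1 with k
    simp only [hgdef, pow_succ, pow_mul]
    push_cast
    norm_num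
    ring_nf
  rw [he', ho'] at h
  have h2 : (2:ℂ) ^ (1 - σ) = 2 * 2 ^ (-σ) := by
    rw [sub_eq_add_neg, cpow_add _ _ (two_ne_zero), cpow_one]
  rw [← h, h2]
  ring

lemma summable_U_norm {s : ℝ} (hs : 1 < s) : Summable (fun j : ℕ => ((j:ℝ)+1) ^ (-s)) := by
  refine ((summable_nat_add_iff 1).mpr (Real.summable_one_div_nat_rpow.mpr hs)).congr
    fun j => ?_
  rw [Real.rpow_neg (by positivity), ← one_div]
  push_cast; norm_num

lemma summable_V_norm {s : ℝ} (hs : 2 < s) : Summable (fun k : ℕ => (2*(k:ℝ)+1) ^ (1-s)) := by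
  have hs1 : 1 < s - 1 := by linarith
  have hbase : Summable (fun k : ℕ => ((k:ℝ)+1) ^ (1-s)) := by
    refine ((summable_nat_add_iff 1).mpr (Real.summable_one_div_nat_rpow.mpr
      hs1)).congr fun k => ?_
    rw [show (1:ℝ) - s = -(s-1) by ring, Real.rpow_neg (by positivity), ← one_div]
    push_cast; norm_num
  refine hbase.of_nonneg_of_le (fun k => by positivity) fun k => ?_
  exact Real.rpow_le_rpow_of_nonpos (by positivity) (by linarith [Nat.cast_nonneg (α := ℝ) k])
    (by linarith)

lemma summable_exp_family {t : ℝ} (ht : 0 < t) :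
    Summable (fun i : ℕ × ℕ =>
      (2*(i.1:ℝ)+1) * Real.exp (-((i.2:ℝ)+1)*(2*(i.1:ℝ)+1)*t)) := by
  set r := Real.exp (-t) with hrdef
  have hr0 : 0 < r := Real.exp_pos _
  have hr1 : r < 1 := Real.exp_lt_one_iff.mpr (by linarith)
  have h1 : Summable (fun k : ℕ => (k:ℝ) * r ^ k) := by
    simpa using summable_pow_mul_geometric_of_norm_lt_one 1
      (r := r) (by rw [Real.norm_eq_abs, abs_of_pos hr0]; exact hr1)
  have h2 : Summable (fun k : ℕ => r ^ k) := summable_geometric_of_lt_one hr0.le hr1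
  have hv : Summable (fun k : ℕ => (2*(k:ℝ)+1) * r ^ (k+1)) := by
    refine (((h1.mul_left 2).add h2).mul_left r).congr fun k => ?_
    ring
  have hprod := hv.mul_of_nonneg h2 (fun k => by positivity) (fun j => by positivity)
  refine hprod.of_nonneg_of_le (fun i => by positivity) fun i => ?_
  obtain ⟨k, j⟩ := i
  have hexp : Real.exp (-((j:ℝ)+1)*(2*(k:ℝ)+1)*t) ≤ r ^ (k+1) * r ^ j := by
    have key : r ^ (k+1) * r ^ j = Real.exp (-((((k:ℕ)+1+(j:ℕ) : ℕ):ℝ) * t)) := by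
      rw [hrdef, ← Real.exp_nat_mul, ← Real.exp_nat_mul, ← Real.exp_add]
      push_cast; ring_nf
    rw [key]
    apply Real.exp_le_exp.mpr
    have hj : (0:ℝ) ≤ (j:ℝ) := Nat.cast_nonneg j
    have hk : (0:ℝ) ≤ (k:ℝ) := Nat.cast_nonneg k
    push_cast
    nlinarith [mul_nonneg (mul_nonneg hj hk) ht.le, mul_nonneg hk ht.le]
  calc (2*(k:ℝ)+1) * Real.exp (-((j:ℝ)+1)*(2*(k:ℝ)+1)*t)
      ≤ (2*(k:ℝ)+1) * (r ^ (k+1) * r ^ j) :=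
        mul_le_mul_of_nonneg_left hexp (by positivity)
    _ = (2*(k:ℝ)+1) * r ^ (k+1) * r ^ j := by ring

lemma summable_signed_exp_family {t : ℝ} (ht : 0 < t) :
    Summable (fun i : ℕ × ℕ =>
      (-1:ℝ)^i.2 * (2*(i.1:ℝ)+1) * Real.exp (-((i.2:ℝ)+1)*(2*(i.1:ℝ)+1)*t)) := by
  apply summable_abs_iff.mp
  refine (summable_exp_family ht).congr fun i => ?_
  rw [_root_.abs_mul, _root_.abs_mul, _root_.abs_pow, _root_.abs_neg, _root_.abs_one,
    one_pow, one_mul, _root_.abs_of_pos (Real.exp_pos _), _root_.abs_of_pos (by positivity)]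

lemma summable_coeff {s : ℝ} (hs : 2 < s) :
    Summable (fun i : ℕ × ℕ =>
      (2*(i.1:ℝ)+1) / ((((i.2:ℝ)+1) * (2*(i.1:ℝ)+1)) ^ s)) := by
  have hg : Summable (fun j : ℕ => ((j:ℝ)+1) ^ (-s)) := summable_U_norm (by linarith)
  have hh : Summable (fun k : ℕ => (2*(k:ℝ)+1) ^ (1-s)) := summable_V_norm hs
  have hprod := hh.mul_of_nonneg hg (fun k => by positivity) (fun j => by positivity)
  refine hprod.congr fun i => ?_
  obtain ⟨k, j⟩ := i
  have hj : (0:ℝ) < (j:ℝ)+1 := by positivity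
  have hk : (0:ℝ) < 2*(k:ℝ)+1 := by positivity
  rw [eq_div_iff (by positivity : ((((j:ℝ)+1) * (2*(k:ℝ)+1)) ^ s) ≠ 0),
    Real.mul_rpow hj.le hk.le, Real.rpow_neg hj.le,
    show (1:ℝ) - s = 1 + (-s) by ring, Real.rpow_add hk, Real.rpow_one,
    Real.rpow_neg hk.le]
  field_simp

lemma norm_cpow_real {x : ℝ} (hx : 0 < x) (σ : ℂ) : ‖((x:ℂ)) ^ σ‖ = x ^ σ.re := by
  rw [norm_cpow_eq_rpow_re_of_pos hx]

lemma tsum_V (σ : ℂ) (hσ : 2 < σ.re) :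
    ∑' k : ℕ, (2*(k:ℂ)+1) / (2*(k:ℂ)+1) ^ σ = (1 - 2 ^ (1-σ)) * riemannZeta (σ-1) := by
  have h1 : 1 < (σ-1).re := by rw [Complex.sub_re, Complex.one_re]; linarith
  have h := tsum_odd_part (σ-1) h1
  rw [neg_sub] at h
  rw [← h]
  congr 1 with k
  have hz : (2*(k:ℂ)+1) ≠ 0 := by
    exact_mod_cast (show (2*(k:ℝ)+1) ≠ 0 by positivity)
  rw [cpow_sub _ _ hz, cpow_one, one_div, inv_div]

/-- The Mellin transform of `G(x) = Σ_{k,j≥1} (-1)^{j-1}(2k-1)e^{-j(2k-1)x}` is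
`Γ(s)·ζ(s)·ζ(s-1)·(1-2^{1-s})²` for real `s > 2`. -/
theorem mellin_G (s : ℝ) (hs : 2 < s) :
    ((∫ x in Set.Ioi (0 : ℝ),
        (∑' k : ℕ, ∑' j : ℕ, (-1 : ℝ) ^ j * (2 * (k : ℝ) + 1) *
          Real.exp (-((j : ℝ) + 1) * (2 * (k : ℝ) + 1) * x)) * x ^ (s - 1) : ℝ) : ℂ) =
      Complex.Gamma s * riemannZeta s * riemannZeta ((s : ℂ) - 1) *
        (1 - (2 : ℂ) ^ ((1 : ℂ) - s)) ^ 2 := by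
  have hσ1 : 1 < (s:ℂ).re := by rw [Complex.ofReal_re]; linarith
  have hσ0 : 0 < (s:ℂ).re := by rw [Complex.ofReal_re]; linarith
  have hσ2 : 2 < (s:ℂ).re := by rw [Complex.ofReal_re]; linarith
  set σ : ℂ := (s : ℂ) with hσdef
  set a : ℕ × ℕ → ℂ := fun i => (((-1:ℝ)^i.2 * (2*(i.1:ℝ)+1) : ℝ) : ℂ) with hadef
  set p : ℕ × ℕ → ℝ := fun i => ((i.2:ℝ)+1) * (2*(i.1:ℝ)+1) with hpdef
  set G : ℝ → ℝ := fun x => ∑' k : ℕ, ∑' j : ℕ, (-1 : ℝ) ^ j * (2 * (k : ℝ) + 1) *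
          Real.exp (-((j : ℝ) + 1) * (2 * (k : ℝ) + 1) * x) with hGdef
  set F : ℝ → ℂ := fun x => ((G x : ℝ) : ℂ) with hFdef
  have hp : ∀ i, a i = 0 ∨ 0 < p i := fun i => Or.inr (by positivity)
  have hF : ∀ t ∈ Ioi (0:ℝ), HasSum (fun i : ℕ×ℕ => a i * Real.exp (-p i * t)) (F t) := by
    intro t ht
    rw [mem_Ioi] at ht
    have hsum := summable_signed_exp_family ht
    have heq : G t = ∑' i : ℕ×ℕ,
        (-1:ℝ)^i.2 * (2*(i.1:ℝ)+1) * Real.exp (-((i.2:ℝ)+1)*(2*(i.1:ℝ)+1)*t) := by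
      rw [hGdef]
      exact (Summable.tsum_prod' hsum fun k => hsum.prod_factor k).symm
    have h1 : HasSum (fun i : ℕ×ℕ =>
        (-1:ℝ)^i.2 * (2*(i.1:ℝ)+1) * Real.exp (-((i.2:ℝ)+1)*(2*(i.1:ℝ)+1)*t)) (G t) := by
      rw [heq]; exact hsum.hasSum
    have h2 := (RCLike.hasSum_ofReal ℂ).mpr h1
    have hfun : (fun i : ℕ×ℕ => a i * (Real.exp (-p i * t) : ℂ)) = fun i : ℕ×ℕ =>
        (((-1:ℝ)^i.2 * (2*(i.1:ℝ)+1) * Real.exp (-((i.2:ℝ)+1)*(2*(i.1:ℝ)+1)*t) : ℝ) : ℂ) := by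
      funext i
      rw [hadef, hpdef]
      push_cast
      ring_nf
    rw [hFdef]
    exact hfun ▸ h2
  have h_sum : Summable (fun i : ℕ×ℕ => ‖a i‖ / (p i) ^ σ.re) := by
    have : σ.re = s := Complex.ofReal_re s
    rw [this]
    refine (summable_coeff hs).congr fun i => ?_
    rw [hadef, hpdef]
    rw [Complex.norm_real, Real.norm_eq_abs, _root_.abs_mul, _root_.abs_pow, _root_.abs_neg,
      _root_.abs_one, one_pow, one_mul, _root_.abs_of_pos (by positivity)]
  have key := hasSum_mellin (a := a) (p := p) (F := F) (s := σ) hp hσ0 hF h_sum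
  have hmel : mellin F σ = ∑' i : ℕ×ℕ, Complex.Gamma σ * a i / ((p i : ℝ) : ℂ) ^ σ :=
    key.tsum_eq.symm
  have hLHS : ((∫ x in Ioi (0:ℝ), G x * x ^ (s-1) : ℝ) : ℂ) = mellin F σ := by
    have : mellin F σ = ∫ x in Ioi (0:ℝ), ((G x * x ^ (s-1) : ℝ) : ℂ) := by
      rw [mellin]
      refine setIntegral_congr_fun measurableSet_Ioi fun x hx => ?_
      rw [mem_Ioi] at hx
      show (x:ℂ) ^ (σ - 1) • ((G x : ℝ) : ℂ) = ((G x * x ^ (s-1) : ℝ) : ℂ)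
      rw [smul_eq_mul, show σ - 1 = ((s-1:ℝ):ℂ) by push_cast; ring,
        ← Complex.ofReal_cpow hx.le, ← Complex.ofReal_mul, mul_comm]
    rw [this]
    exact (integral_ofReal (f := fun x => G x * x ^ (s-1))).symm
  rw [hLHS, hmel]
  -- evaluate the sum
  set U : ℕ → ℂ := fun j => (-1:ℂ)^j / ((j:ℂ)+1)^σ with hUdef
  set V : ℕ → ℂ := fun k => (2*(k:ℂ)+1) / (2*(k:ℂ)+1)^σ with hVdef
  have hnormU : ∀ j : ℕ, ‖U j‖ = ((j:ℝ)+1) ^ (-s) := by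
    intro j
    rw [hUdef]
    have hj : (0:ℝ) < (j:ℝ)+1 := by positivity
    have hcast : ((j:ℂ)+1) = (((j:ℝ)+1 : ℝ) : ℂ) := by push_cast; ring
    rw [norm_div, norm_pow, norm_neg, norm_one, one_pow, hcast, norm_cpow_real hj,
      Complex.ofReal_re, Real.rpow_neg hj.le, one_div]
  have hnormV : ∀ k : ℕ, ‖V k‖ = (2*(k:ℝ)+1) ^ (1-s) := by
    intro k
    simp only [hVdef]
    have hk : (0:ℝ) < 2*(k:ℝ)+1 := by positivity
    have hcast : (2*(k:ℂ)+1) = ((2*(k:ℝ)+1 : ℝ) : ℂ) := by push_cast; ring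
    rw [hcast, norm_div, Complex.norm_real, Real.norm_eq_abs, _root_.abs_of_pos hk,
      norm_cpow_real hk, Complex.ofReal_re, Real.rpow_sub hk, Real.rpow_one]
  have hUsum : Summable U := by
    rw [← summable_norm_iff]
    exact (summable_U_norm (show 1 < s by linarith)).congr fun j => (hnormU j).symm
  have hVsum : Summable V := by
    rw [← summable_norm_iff]
    exact (summable_V_norm hs).congr fun k => (hnormV k).symm
  have hVU : Summable (fun i : ℕ×ℕ => V i.1 * U i.2) := by
    rw [← summable_norm_iff]
    refine ((summable_V_norm hs).mul_of_nonneg (summable_U_norm (show 1 < s by linarith))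
      (fun k => by positivity) (fun j => by positivity)).congr fun i => ?_
    rw [norm_mul, hnormV, hnormU]
  have hterm : ∀ i : ℕ×ℕ, Complex.Gamma σ * a i / ((p i : ℝ):ℂ) ^ σ
      = Complex.Gamma σ * (V i.1 * U i.2) := by
    rintro ⟨k, j⟩
    have hj : (0:ℝ) ≤ (j:ℝ)+1 := by positivity
    have hk : (0:ℝ) ≤ 2*(k:ℝ)+1 := by positivity
    have hsplit : ((((j:ℝ)+1) * (2*(k:ℝ)+1) : ℝ) : ℂ) ^ σ
        = (((j:ℝ)+1 : ℝ):ℂ) ^ σ * ((2*(k:ℝ)+1 : ℝ):ℂ) ^ σ := by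
      rw [Complex.ofReal_mul]; exact mul_cpow_ofReal_nonneg hj hk σ
    simp only [hadef, hpdef, hVdef, hUdef]
    rw [hsplit]
    push_cast
    rw [div_eq_mul_inv, mul_inv]
    ring
  calc ∑' i : ℕ×ℕ, Complex.Gamma σ * a i / ((p i : ℝ):ℂ) ^ σ
      = ∑' i : ℕ×ℕ, Complex.Gamma σ * (V i.1 * U i.2) := tsum_congr hterm
    _ = Complex.Gamma σ * ((∑' k, V k) * (∑' j, U j)) := by
        rw [tsum_mul_left, Summable.tsum_mul_tsum hVsum hUsum hVU]
    _ = Complex.Gamma σ * riemannZeta σ * riemannZeta (σ - 1)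
          * (1 - (2:ℂ) ^ ((1:ℂ) - σ)) ^ 2 := by
        rw [tsum_V σ hσ2, tsum_alt σ hσ1]
        ring
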